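/- Let $W \in \mathbb{R}^{p_1 \times p_2}$ have rank $m$, and let $PM_s(W)$ denote the best rank-$s$ approximation of $W$ obtained by truncating its singular value decomposition to the top $s$ singular values, with $s^* \le s \le m$ and $s^* < m$. Then for any rank-$s^*$ matrix $W^* \in \mathbb{R}^{p_1 \times p_2}$, $\|PM_s(W) - W\|_F^2 \le \frac{m - s}{m - s^*} \|W^* - W\|_F^2$. -/

import Mathlib

open Finset



lemma resid_identity {p : ℕ} {ι : Type*} [DecidableEq ι] (t : Finset ι) (w : ι → Fin p → ℝ)
    (hw : ∀ k ∈ t, ∀ k' ∈ t, (∑ i, w k i * w k' i) = if k = k' then (1:ℝ) else 0)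
    (z : Fin p → ℝ) :
    ∑ i, (z i - ∑ k ∈ t, (∑ l, w k l * z l) * w k i) ^ 2
      = ∑ i, z i ^ 2 - ∑ k ∈ t, (∑ l, w k l * z l) ^ 2 := by
  set c : ι → ℝ := fun k => ∑ l, w k l * z l with hc
  have h1 : ∀ i : Fin p, (z i - ∑ k ∈ t, c k * w k i) ^ 2
      = z i ^ 2 - 2 * ((∑ k ∈ t, c k * w k i) * z i) + (∑ k ∈ t, c k * w k i) * (∑ k ∈ t, c k * w k i) := by
    intro i; ring
  rw [Finset.sum_congr rfl fun i _ => h1 i]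
  rw [Finset.sum_add_distrib, Finset.sum_sub_distrib]
  have h2 : ∑ i : Fin p, 2 * ((∑ k ∈ t, c k * w k i) * z i) = 2 * ∑ k ∈ t, c k ^ 2 := by
    rw [← Finset.mul_sum]
    congr 1
    calc ∑ i : Fin p, (∑ k ∈ t, c k * w k i) * z i
        = ∑ i : Fin p, ∑ k ∈ t, c k * (w k i * z i) := by
          refine Finset.sum_congr rfl fun i _ => ?_
          rw [Finset.sum_mul]
          exact Finset.sum_congr rfl fun k _ => by ring
      _ = ∑ k ∈ t, ∑ i : Fin p, c k * (w k i * z i) := Finset.sum_comm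
      _ = ∑ k ∈ t, c k * ∑ i : Fin p, w k i * z i := by
          exact Finset.sum_congr rfl fun k _ => (Finset.mul_sum _ _ _).symm
      _ = ∑ k ∈ t, c k ^ 2 := Finset.sum_congr rfl fun k _ => by rw [hc]; ring
  have h3 : ∑ i : Fin p, (∑ k ∈ t, c k * w k i) * (∑ k ∈ t, c k * w k i) = ∑ k ∈ t, c k ^ 2 := by
    calc ∑ i : Fin p, (∑ k ∈ t, c k * w k i) * (∑ k ∈ t, c k * w k i)
        = ∑ i : Fin p, ∑ k ∈ t, ∑ k' ∈ t, (c k * c k') * (w k i * w k' i) := by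
          refine Finset.sum_congr rfl fun i _ => ?_
          rw [Finset.sum_mul_sum]
          exact Finset.sum_congr rfl fun k _ => Finset.sum_congr rfl fun k' _ => by ring
      _ = ∑ k ∈ t, ∑ i : Fin p, ∑ k' ∈ t, (c k * c k') * (w k i * w k' i) := Finset.sum_comm
      _ = ∑ k ∈ t, ∑ k' ∈ t, ∑ i : Fin p, (c k * c k') * (w k i * w k' i) := by
          exact Finset.sum_congr rfl fun k _ => Finset.sum_comm
      _ = ∑ k ∈ t, ∑ k' ∈ t, (c k * c k') * ∑ i : Fin p, w k i * w k' i := by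
          exact Finset.sum_congr rfl fun k _ => Finset.sum_congr rfl fun k' _ => (Finset.mul_sum _ _ _).symm
      _ = ∑ k ∈ t, ∑ k' ∈ t, if k = k' then c k * c k' else 0 := by
          refine Finset.sum_congr rfl fun k hk => Finset.sum_congr rfl fun k' hk' => ?_
          rw [hw k hk k' hk']
          split <;> ring
      _ = ∑ k ∈ t, c k ^ 2 := by
          refine Finset.sum_congr rfl fun k hk => ?_
          rw [Finset.sum_ite_eq t k (fun k' => c k * c k'), if_pos hk, sq]
  rw [h2, h3]; ring

lemma bessel {p : ℕ} {ι : Type*} [DecidableEq ι] (t : Finset ι) (w : ι → Fin p → ℝ)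
    (hw : ∀ k ∈ t, ∀ k' ∈ t, (∑ i, w k i * w k' i) = if k = k' then (1:ℝ) else 0)
    (z : Fin p → ℝ) :
    ∑ k ∈ t, (∑ l, w k l * z l) ^ 2 ≤ ∑ i, z i ^ 2 := by
  have h := resid_identity t w hw z
  have h0 : (0:ℝ) ≤ ∑ i, (z i - ∑ k ∈ t, (∑ l, w k l * z l) * w k i) ^ 2 :=
    Finset.sum_nonneg fun i _ => sq_nonneg _
  linarith [h0, h.symm]

lemma frob_svd {p1 p2 m : ℕ} (F : Finset ℕ) (hF : F ⊆ Finset.range m) (c : ℕ → ℝ)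
    (u : ℕ → Fin p1 → ℝ) (v : ℕ → Fin p2 → ℝ)
    (hu : ∀ i < m, ∀ j < m, (∑ k, u i k * u j k) = if i = j then (1 : ℝ) else 0)
    (hv : ∀ i < m, ∀ j < m, (∑ k, v i k * v j k) = if i = j then (1 : ℝ) else 0) :
    ∑ i, ∑ j, (∑ k ∈ F, c k * (u k i * v k j)) ^ 2 = ∑ k ∈ F, c k ^ 2 := by
  have key : ∀ k ∈ F, ∀ k' ∈ F,
      (∑ i, u k i * u k' i) * (∑ j, v k j * v k' j) = if k = k' then (1:ℝ) else 0 := by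
    intro k hk k' hk'
    have hkm := Finset.mem_range.mp (hF hk)
    have hkm' := Finset.mem_range.mp (hF hk')
    rw [hu k hkm k' hkm', hv k hkm k' hkm']
    split <;> norm_num
  calc ∑ i, ∑ j, (∑ k ∈ F, c k * (u k i * v k j)) ^ 2
      = ∑ i, ∑ j, ∑ k ∈ F, ∑ k' ∈ F, (c k * c k') * ((u k i * u k' i) * (v k j * v k' j)) := by
        refine Finset.sum_congr rfl fun i _ => Finset.sum_congr rfl fun j _ => ?_
        rw [pow_two]
        exact (Finset.sum_mul_sum F F _ _).trans
          (Finset.sum_congr rfl fun k _ => Finset.sum_congr rfl fun k' _ => by ring)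
    _ = ∑ k ∈ F, ∑ k' ∈ F, (c k * c k') * ((∑ i, u k i * u k' i) * (∑ j, v k j * v k' j)) := by
        refine Eq.trans (Finset.sum_congr rfl fun i _ => Finset.sum_comm)
          (Eq.trans Finset.sum_comm (Finset.sum_congr rfl fun k _ => ?_))
        calc ∑ i, ∑ j, ∑ k' ∈ F, (c k * c k') * ((u k i * u k' i) * (v k j * v k' j))
            = ∑ i, ∑ k' ∈ F, ∑ j, (c k * c k') * ((u k i * u k' i) * (v k j * v k' j)) := by
              exact Finset.sum_congr rfl fun i _ => Finset.sum_comm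
          _ = ∑ k' ∈ F, ∑ i, ∑ j, (c k * c k') * ((u k i * u k' i) * (v k j * v k' j)) :=
              Finset.sum_comm
          _ = ∑ k' ∈ F, (c k * c k') * ((∑ i, u k i * u k' i) * (∑ j, v k j * v k' j)) := by
              refine Finset.sum_congr rfl fun k' _ => ?_
              rw [Finset.sum_mul_sum, Finset.mul_sum]
              refine Finset.sum_congr rfl fun i _ => ?_
              rw [Finset.mul_sum]
    _ = ∑ k ∈ F, ∑ k' ∈ F, if k = k' then c k * c k' else 0 := by
        refine Finset.sum_congr rfl fun k hk => Finset.sum_congr rfl fun k' hk' => ?_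
        rw [key k hk k' hk']
        split <;> ring
    _ = ∑ k ∈ F, c k ^ 2 := by
        refine Finset.sum_congr rfl fun k hk => ?_
        rw [Finset.sum_ite_eq F k (fun k' => c k * c k'), if_pos hk, sq]


set_option maxHeartbeats 2000000 in
theorem matrix_hard_thresholding (p1 p2 m s sstar : ℕ) (hss : sstar ≤ s)
    (hsm : s ≤ m) (hsm' : sstar < m) (hm1 : m ≤ p1) (hm2 : m ≤ p2)
    (σ : ℕ → ℝ) (hpos : ∀ i < m, 0 < σ i)
    (hsort : ∀ i j, i ≤ j → j < m → σ j ≤ σ i)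
    (u : ℕ → Fin p1 → ℝ) (v : ℕ → Fin p2 → ℝ)
    (hu : ∀ i < m, ∀ j < m, (∑ k, u i k * u j k) = if i = j then (1 : ℝ) else 0)
    (hv : ∀ i < m, ∀ j < m, (∑ k, v i k * v j k) = if i = j then (1 : ℝ) else 0)
    (W P Wstar : Matrix (Fin p1) (Fin p2) ℝ)
    (hW : W = ∑ i ∈ Finset.range m, σ i • Matrix.vecMulVec (u i) (v i))
    (hP : P = ∑ i ∈ Finset.range s, σ i • Matrix.vecMulVec (u i) (v i))
    (hrank : Wstar.rank ≤ sstar) :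
    ∑ i, ∑ j, (P i j - W i j) ^ 2 ≤
      ((m - s : ℕ) : ℝ) / ((m - sstar : ℕ) : ℝ) *
        ∑ i, ∑ j, (Wstar i j - W i j) ^ 2 := by
  classical
  have hms0 : 0 < m - sstar := Nat.sub_pos_of_lt hsm'
  have hmsR : (0:ℝ) < ((m - sstar : ℕ) : ℝ) := by exact_mod_cast hms0
  -- Step A : ‖P - W‖² = ∑_{k ∈ [s,m)} σ k ²
  have hsub : Finset.Ico s m ⊆ Finset.range m := by
    intro k hk; rw [Finset.mem_range]; exact (Finset.mem_Ico.mp hk).2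
  have hPW : ∀ i j, P i j - W i j = -(∑ k ∈ Finset.Ico s m, σ k * (u k i * v k j)) := by
    intro i j
    have hWsplit : W = P + ∑ k ∈ Finset.Ico s m, σ k • Matrix.vecMulVec (u k) (v k) := by
      rw [hW, hP, Finset.range_eq_Ico,
        ← Finset.sum_Ico_consecutive _ (Nat.zero_le s) hsm, ← Finset.range_eq_Ico]
    rw [hWsplit]
    simp [Matrix.sum_apply, Matrix.vecMulVec_apply, mul_assoc]
  have hL : ∑ i, ∑ j, (P i j - W i j) ^ 2 = ∑ k ∈ Finset.Ico s m, σ k ^ 2 := by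
    rw [← frob_svd (Finset.Ico s m) hsub σ u v hu hv]
    refine Finset.sum_congr rfl fun i _ => Finset.sum_congr rfl fun j _ => ?_
    rw [hPW i j]; ring
  -- Euclidean space machinery
  set S : Submodule ℝ (EuclideanSpace ℝ (Fin p1)) := LinearMap.range (Matrix.toEuclideanLin Wstar) with hS
  have hrk : Wstar.rank = Module.finrank ℝ S := by
    rw [Matrix.rank_eq_finrank_range_toLin Wstar (PiLp.basisFun 2 ℝ (Fin p1))
      (PiLp.basisFun 2 ℝ (Fin p2))]
    rfl
  set r := Module.finrank ℝ S with hrdef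
  have hrs : r ≤ sstar := hrk ▸ hrank
  let b : OrthonormalBasis (Fin r) ℝ S := stdOrthonormalBasis ℝ S
  set w : Fin r → Fin p1 → ℝ := fun k => ((b k : EuclideanSpace ℝ (Fin p1)) : Fin p1 → ℝ) with hwdef
  have hworth : ∀ k k' : Fin r, (∑ i, w k i * w k' i) = if k = k' then (1:ℝ) else 0 := by
    intro k k'
    have h := b.orthonormal
    rw [orthonormal_iff_ite] at h
    have h2 := h k k'
    rw [Submodule.coe_inner, PiLp.inner_apply] at h2
    simpa [RCLike.inner_apply, mul_comm] using h2
  have hworth' : ∀ k ∈ (Finset.univ : Finset (Fin r)), ∀ k' ∈ (Finset.univ : Finset (Fin r)),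
      (∑ i, w k i * w k' i) = if k = k' then (1:ℝ) else 0 := fun k _ k' _ => hworth k k'
  have hmem : ∀ x : Fin p2 → ℝ, (WithLp.toLp 2 (Wstar.mulVec x) : EuclideanSpace ℝ (Fin p1)) ∈ S :=
    fun x => ⟨WithLp.toLp 2 x, rfl⟩
  have hexp : ∀ x : EuclideanSpace ℝ (Fin p1), x ∈ S → ∀ i,
      x i = ∑ k, (∑ l, w k l * x l) * w k i := by
    intro x hx i
    have hrep := b.sum_repr ⟨x, hx⟩
    have hcoe : x = ∑ k, b.repr ⟨x, hx⟩ k • (w k) := by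
      have := congrArg (Subtype.val) hrep
      simpa [hwdef] using congrArg WithLp.ofLp this.symm
    have hval : ∀ k, b.repr ⟨x, hx⟩ k = ∑ l, w k l * x l := by
      intro k
      rw [b.repr_apply_apply, Submodule.coe_inner, PiLp.inner_apply]
      simp [RCLike.inner_apply, hwdef, mul_comm]
    calc x i = (∑ k, b.repr ⟨x, hx⟩ k • (w k)) i := by rw [← hcoe]
      _ = ∑ k, (∑ l, w k l * x l) * w k i := by
          rw [Finset.sum_apply]
          exact Finset.sum_congr rfl fun k _ => by rw [hval k]; simp [mul_comm]
  -- normalization of u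
  have hu1 : ∀ j < m, (∑ i, u j i ^ 2) = 1 := by
    intro j hj
    have := hu j hj j hj
    rw [if_pos rfl] at this
    rw [← this]
    exact Finset.sum_congr rfl fun i _ => (pow_two _)
  -- t j : the leakage coefficients
  set t : ℕ → ℝ := fun j => ∑ k : Fin r, (∑ l, w k l * u j l) ^ 2 with htdef
  have ht0 : ∀ j, 0 ≤ t j := fun j => Finset.sum_nonneg fun k _ => sq_nonneg _
  have ht1 : ∀ j < m, t j ≤ 1 := by
    intro j hj
    have h := bessel Finset.univ w hworth' (u j)
    rw [hu1 j hj] at h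
    exact h
  have htsum : ∑ j ∈ Finset.range m, t j ≤ (sstar : ℝ) := by
    have hswap : ∑ j ∈ Finset.range m, t j
        = ∑ k : Fin r, ∑ j ∈ Finset.range m, (∑ l, u j l * w k l) ^ 2 := by
      rw [htdef]
      refine Eq.trans Finset.sum_comm ?_
      refine Finset.sum_congr rfl fun k _ => Finset.sum_congr rfl fun j _ => ?_
      congr 1
      exact Finset.sum_congr rfl fun l _ => mul_comm _ _
    rw [hswap]
    have hbound : ∀ k : Fin r, ∑ j ∈ Finset.range m, (∑ l, u j l * w k l) ^ 2 ≤ 1 := by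
      intro k
      have h := bessel (Finset.range m) u
        (fun j hj j' hj' => hu j (Finset.mem_range.mp hj) j' (Finset.mem_range.mp hj')) (w k)
      have hw1 : (∑ i, w k i ^ 2) = 1 := by
        have := hworth k k
        rw [if_pos rfl] at this
        rw [← this]
        exact Finset.sum_congr rfl fun i _ => (pow_two _)
      rw [hw1] at h
      exact h
    calc ∑ k : Fin r, ∑ j ∈ Finset.range m, (∑ l, u j l * w k l) ^ 2
        ≤ ∑ _k : Fin r, (1:ℝ) := Finset.sum_le_sum fun k _ => hbound k
      _ = (r : ℝ) := by simp
      _ ≤ (sstar : ℝ) := by exact_mod_cast hrs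
  -- per-j Eckart-Young lower bound
  have hperj : ∀ j < m, σ j ^ 2 * (1 - t j)
      ≤ ∑ i, ((Wstar.mulVec (v j)) i - σ j * u j i) ^ 2 := by
    intro j hj
    set y : Fin p1 → ℝ := Wstar.mulVec (v j) with hydef
    set z : Fin p1 → ℝ := fun i => y i - σ j * u j i with hzdef
    have hyexp : ∀ i, y i = ∑ k, (∑ l, w k l * y l) * w k i :=
      hexp (WithLp.toLp 2 y) (hmem (v j))
    have hlin : ∀ k : Fin r,
        (∑ l, w k l * z l) = (∑ l, w k l * y l) - σ j * (∑ l, w k l * u j l) := by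
      intro k
      rw [Finset.mul_sum, ← Finset.sum_sub_distrib]
      exact Finset.sum_congr rfl fun l _ => by rw [hzdef]; ring
    have hzresid : ∀ i, z i - ∑ k, (∑ l, w k l * z l) * w k i
        = -(σ j) * (u j i - ∑ k, (∑ l, w k l * u j l) * w k i) := by
      intro i
      rw [Finset.sum_congr rfl fun k _ => by rw [hlin k]]
      have hsplit : ∑ k : Fin r, ((∑ l, w k l * y l) - σ j * (∑ l, w k l * u j l)) * w k i
          = (∑ k : Fin r, (∑ l, w k l * y l) * w k i)
            - σ j * ∑ k : Fin r, (∑ l, w k l * u j l) * w k i := by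
        rw [Finset.mul_sum, ← Finset.sum_sub_distrib]
        exact Finset.sum_congr rfl fun k _ => by ring
      rw [hsplit, hzdef]
      have := hyexp i
      simp only
      linarith [this]
    have hidz := resid_identity Finset.univ w hworth' z
    have hidu := resid_identity Finset.univ w hworth' (u j)
    have hstep : ∑ i, (z i - ∑ k, (∑ l, w k l * z l) * w k i) ^ 2 = σ j ^ 2 * (1 - t j) := by
      calc ∑ i, (z i - ∑ k, (∑ l, w k l * z l) * w k i) ^ 2
          = ∑ i, σ j ^ 2 * (u j i - ∑ k, (∑ l, w k l * u j l) * w k i) ^ 2 := by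
            refine Finset.sum_congr rfl fun i _ => ?_
            rw [hzresid i]; ring
        _ = σ j ^ 2 * ∑ i, (u j i - ∑ k, (∑ l, w k l * u j l) * w k i) ^ 2 :=
            (Finset.mul_sum _ _ _).symm
        _ = σ j ^ 2 * (∑ i, u j i ^ 2 - ∑ k : Fin r, (∑ l, w k l * u j l) ^ 2) := by rw [hidu]
        _ = σ j ^ 2 * (1 - t j) := by rw [hu1 j hj, htdef]
    have hcnn : (0:ℝ) ≤ ∑ k : Fin r, (∑ l, w k l * z l) ^ 2 :=
      Finset.sum_nonneg fun k _ => sq_nonneg _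
    have : ∑ i, z i ^ 2 ≥ σ j ^ 2 * (1 - t j) := by linarith [hidz, hstep, hcnn]
    simpa [hzdef, hydef] using this
  -- rows inequality : ∑_j ‖(Wstar - W) v_j‖² ≤ ‖Wstar - W‖²
  have hAv : ∀ j, j < m → ∀ i : Fin p1,
      (∑ l, v j l * (Wstar i l - W i l)) = (Wstar.mulVec (v j)) i - σ j * u j i := by
    intro j hj i
    have hWv : ∑ l, v j l * W i l = σ j * u j i := by
      rw [hW]
      have : ∀ l, v j l * (∑ k ∈ Finset.range m, σ k • Matrix.vecMulVec (u k) (v k)) i l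
          = ∑ k ∈ Finset.range m, σ k * u k i * (v k l * v j l) := by
        intro l
        rw [Matrix.sum_apply, Finset.mul_sum]
        exact Finset.sum_congr rfl fun k _ => by
          simp [Matrix.vecMulVec_apply]; ring
      rw [Finset.sum_congr rfl fun l _ => this l]
      rw [Finset.sum_comm]
      calc ∑ k ∈ Finset.range m, ∑ l, σ k * u k i * (v k l * v j l)
          = ∑ k ∈ Finset.range m, σ k * u k i * ∑ l, v k l * v j l := by
            exact Finset.sum_congr rfl fun k _ => (Finset.mul_sum _ _ _).symm
        _ = ∑ k ∈ Finset.range m, σ k * u k i * (if k = j then 1 else 0) := by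
            refine Finset.sum_congr rfl fun k hk => ?_
            rw [hv k (Finset.mem_range.mp hk) j hj]
        _ = σ j * u j i := by
            rw [Finset.sum_congr rfl (fun k _ => by
              rw [mul_ite, mul_one, mul_zero])]
            rw [Finset.sum_ite_eq' (Finset.range m) j (fun k => σ k * u k i)]
            simp [Finset.mem_range.mpr hj]
    have hWsv : ∑ l, v j l * Wstar i l = (Wstar.mulVec (v j)) i := by
      simp [Matrix.mulVec, dotProduct, mul_comm]
    calc ∑ l, v j l * (Wstar i l - W i l)
        = (∑ l, v j l * Wstar i l) - ∑ l, v j l * W i l := by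
          rw [← Finset.sum_sub_distrib]
          exact Finset.sum_congr rfl fun l _ => by ring
      _ = (Wstar.mulVec (v j)) i - σ j * u j i := by rw [hWv, hWsv]
  have hLL : ∑ j ∈ Finset.range m, ∑ i, (∑ l, v j l * (Wstar i l - W i l)) ^ 2
      ≤ ∑ i, ∑ l, (Wstar i l - W i l) ^ 2 := by
    rw [Finset.sum_comm]
    refine Finset.sum_le_sum fun i _ => ?_
    exact bessel (Finset.range m) v
      (fun j hj j' hj' => hv j (Finset.mem_range.mp hj) j' (Finset.mem_range.mp hj'))
      (fun l => Wstar i l - W i l)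
  -- Eckart-Young
  have hEY : ∑ k ∈ Finset.Ico sstar m, σ k ^ 2 ≤ ∑ i, ∑ l, (Wstar i l - W i l) ^ 2 := by
    have hmid : ∑ j ∈ Finset.range m, σ j ^ 2 * (1 - t j)
        ≤ ∑ j ∈ Finset.range m, ∑ i, (∑ l, v j l * (Wstar i l - W i l)) ^ 2 := by
      refine Finset.sum_le_sum fun j hj => ?_
      have hjm := Finset.mem_range.mp hj
      have h1 := hperj j hjm
      have h2 : ∑ i, (∑ l, v j l * (Wstar i l - W i l)) ^ 2
          = ∑ i, ((Wstar.mulVec (v j)) i - σ j * u j i) ^ 2 :=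
        Finset.sum_congr rfl fun i _ => by rw [hAv j hjm i]
      rw [h2]; exact h1
    -- arithmetic: ∑_{Ico sstar m} σ² ≤ ∑_{range m} σ²(1 - t)
    have harith : ∑ k ∈ Finset.Ico sstar m, σ k ^ 2
        ≤ ∑ j ∈ Finset.range m, σ j ^ 2 * (1 - t j) := by
      have hsplitsum : ∑ j ∈ Finset.range m, σ j ^ 2 * (1 - t j)
          = (∑ j ∈ Finset.Ico 0 sstar, σ j ^ 2 * (1 - t j))
            + ∑ j ∈ Finset.Ico sstar m, σ j ^ 2 * (1 - t j) := by
        rw [Finset.range_eq_Ico,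
          ← Finset.sum_Ico_consecutive _ (Nat.zero_le sstar) (le_of_lt hsm')]
      have hsplitt : (∑ j ∈ Finset.Ico 0 sstar, t j) + ∑ j ∈ Finset.Ico sstar m, t j
          = ∑ j ∈ Finset.range m, t j := by
        rw [Finset.range_eq_Ico]
        exact Finset.sum_Ico_consecutive _ (Nat.zero_le sstar) (le_of_lt hsm')
      set T1 := ∑ j ∈ Finset.Ico 0 sstar, t j with hT1
      set T2 := ∑ j ∈ Finset.Ico sstar m, t j with hT2
      have hsig : 0 < σ sstar := hpos sstar hsm'
      have hlow : σ sstar ^ 2 * ((sstar : ℝ) - T1)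
          ≤ ∑ j ∈ Finset.Ico 0 sstar, σ j ^ 2 * (1 - t j) := by
        have : ∑ j ∈ Finset.Ico 0 sstar, σ sstar ^ 2 * (1 - t j)
            ≤ ∑ j ∈ Finset.Ico 0 sstar, σ j ^ 2 * (1 - t j) := by
          refine Finset.sum_le_sum fun j hj => ?_
          have hjs := (Finset.mem_Ico.mp hj).2
          have hjm : j < m := lt_trans hjs hsm'
          have h1t : 0 ≤ 1 - t j := by linarith [ht1 j hjm]
          have hσ : σ sstar ≤ σ j := hsort j sstar (le_of_lt hjs) hsm'
          have hσj : 0 < σ j := hpos j hjm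
          have : σ sstar ^ 2 ≤ σ j ^ 2 := by nlinarith
          nlinarith
        have heq : ∑ j ∈ Finset.Ico 0 sstar, σ sstar ^ 2 * (1 - t j)
            = σ sstar ^ 2 * ((sstar : ℝ) - T1) := by
          rw [← Finset.mul_sum]
          congr 1
          rw [Finset.sum_sub_distrib, Finset.sum_const, Nat.card_Ico, Nat.sub_zero,
            nsmul_eq_mul, mul_one]
        linarith [this, heq]
      have hupp : (∑ j ∈ Finset.Ico sstar m, σ j ^ 2) - σ sstar ^ 2 * T2
          ≤ ∑ j ∈ Finset.Ico sstar m, σ j ^ 2 * (1 - t j) := by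
        have hle : ∑ j ∈ Finset.Ico sstar m, (σ j ^ 2 - σ sstar ^ 2 * t j)
            ≤ ∑ j ∈ Finset.Ico sstar m, σ j ^ 2 * (1 - t j) := by
          refine Finset.sum_le_sum fun j hj => ?_
          obtain ⟨hj1, hj2⟩ := Finset.mem_Ico.mp hj
          have hσ : σ j ≤ σ sstar := hsort sstar j hj1 hj2
          have hσj : 0 < σ j := hpos j hj2
          have hsq : σ j ^ 2 ≤ σ sstar ^ 2 := by nlinarith
          have htj := ht0 j
          nlinarith
        have heq : ∑ j ∈ Finset.Ico sstar m, (σ j ^ 2 - σ sstar ^ 2 * t j)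
            = (∑ j ∈ Finset.Ico sstar m, σ j ^ 2) - σ sstar ^ 2 * T2 := by
          rw [Finset.sum_sub_distrib, ← Finset.mul_sum]
        linarith [hle, heq]
      have hTs : T1 + T2 ≤ (sstar : ℝ) := by
        rw [hsplitt]; exact htsum
      have hring : σ sstar ^ 2 * ((sstar : ℝ) - T1) - σ sstar ^ 2 * T2
          = σ sstar ^ 2 * ((sstar : ℝ) - T1 - T2) := by ring
      have hnn : (0:ℝ) ≤ σ sstar ^ 2 * ((sstar : ℝ) - T1 - T2) :=
        mul_nonneg (sq_nonneg _) (by linarith)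
      linarith [hsplitsum, hlow, hupp, hring, hnn]
    calc ∑ k ∈ Finset.Ico sstar m, σ k ^ 2
        ≤ ∑ j ∈ Finset.range m, σ j ^ 2 * (1 - t j) := harith
      _ ≤ ∑ j ∈ Finset.range m, ∑ i, (∑ l, v j l * (Wstar i l - W i l)) ^ 2 := hmid
      _ ≤ ∑ i, ∑ l, (Wstar i l - W i l) ^ 2 := hLL
  -- Step C and conclusion
  have hC : ((m - sstar : ℕ) : ℝ) * ∑ k ∈ Finset.Ico s m, σ k ^ 2
      ≤ ((m - s : ℕ) : ℝ) * ∑ k ∈ Finset.Ico sstar m, σ k ^ 2 := by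
    set A := ∑ k ∈ Finset.Ico s m, σ k ^ 2 with hA
    set B := ∑ k ∈ Finset.Ico sstar s, σ k ^ 2 with hB
    have hsplit : ∑ k ∈ Finset.Ico sstar m, σ k ^ 2 = B + A :=
      (Finset.sum_Ico_consecutive _ hss hsm).symm
    have hcross : ((s - sstar : ℕ) : ℝ) * A ≤ ((m - s : ℕ) : ℝ) * B := by
      have h1 : ∑ i ∈ Finset.Ico sstar s, ∑ j ∈ Finset.Ico s m, σ j ^ 2
          ≤ ∑ i ∈ Finset.Ico sstar s, ∑ j ∈ Finset.Ico s m, σ i ^ 2 := by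
        refine Finset.sum_le_sum fun i hi => Finset.sum_le_sum fun j hj => ?_
        obtain ⟨hi1, hi2⟩ := Finset.mem_Ico.mp hi
        obtain ⟨hj1, hj2⟩ := Finset.mem_Ico.mp hj
        have hσ : σ j ≤ σ i := hsort i j (le_of_lt (lt_of_lt_of_le hi2 hj1)) hj2
        have hσj : 0 < σ j := hpos j hj2
        nlinarith
      have h2 : ∑ i ∈ Finset.Ico sstar s, ∑ j ∈ Finset.Ico s m, σ j ^ 2
          = ((s - sstar : ℕ) : ℝ) * A := by
        rw [Finset.sum_const, Nat.card_Ico, nsmul_eq_mul]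
      have h3 : ∑ i ∈ Finset.Ico sstar s, ∑ j ∈ Finset.Ico s m, σ i ^ 2
          = ((m - s : ℕ) : ℝ) * B := by
        rw [Finset.mul_sum]
        refine Finset.sum_congr rfl fun i _ => ?_
        rw [Finset.sum_const, Nat.card_Ico, nsmul_eq_mul]
      linarith [h1, h2.symm, h3.symm]
    have hcast : ((m - sstar : ℕ) : ℝ) = ((s - sstar : ℕ) : ℝ) + ((m - s : ℕ) : ℝ) := by
      have : m - sstar = (s - sstar) + (m - s) := by omega
      rw [this, Nat.cast_add]
    have hexpand : ((m - sstar : ℕ) : ℝ) * A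
        = ((s - sstar : ℕ) : ℝ) * A + ((m - s : ℕ) : ℝ) * A := by rw [hcast]; ring
    have hrhs : ((m - s : ℕ) : ℝ) * (B + A)
        = ((m - s : ℕ) : ℝ) * B + ((m - s : ℕ) : ℝ) * A := by ring
    rw [hsplit]
    linarith [hcross, hexpand, hrhs]
  rw [hL, div_mul_eq_mul_div, le_div_iff₀ hmsR]
  have hmsnn : (0:ℝ) ≤ ((m - s : ℕ) : ℝ) := Nat.cast_nonneg _
  calc (∑ k ∈ Finset.Ico s m, σ k ^ 2) * ((m - sstar : ℕ) : ℝ)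
      = ((m - sstar : ℕ) : ℝ) * ∑ k ∈ Finset.Ico s m, σ k ^ 2 := mul_comm _ _
    _ ≤ ((m - s : ℕ) : ℝ) * ∑ k ∈ Finset.Ico sstar m, σ k ^ 2 := hC
    _ ≤ ((m - s : ℕ) : ℝ) * ∑ i, ∑ l, (Wstar i l - W i l) ^ 2 :=
        mul_le_mul_of_nonneg_left hEY hmsnn
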